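/- Let C₁,…,C_N be closed convex sets in ℝ^d with nonempty intersection C, and let β^{(n)} ∈ ℬ. Define x^{(n)} = Q_{β^{(n)}}(x^{(n-1)}). Then for any c ∈ C and any n, with ν_i^{(m)} = 2β_i^{(m)}(2 - ∑_k β_k^{(m)})/(β_i^{(m)} + 2 - ∑_k β_k^{(m)}) and I^{(m)} = {i : β_i^{(m)} > 0}: ‖x^{(n)} - c‖² ≤ ‖x^{(0)} - c‖² - ∑_{m=1}^n (min_{i∈I^{(m)}} ν_i^{(m)}) · (max_{i∈I^{(m)}} d(x^{(m-1)}, C_i)²), whenever all I^{(m)} are nonempty. -/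

import Mathlib

open Finset

private lemma lemA {E : Type*} [NormedAddCommGroup E] [InnerProductSpace ℝ E]
    {K : Set E} (hK : Convex ℝ K) {x v c : E} (hv : v ∈ K) (hc : c ∈ K)
    (hmin : ∀ y ∈ K, ‖x - v‖ ≤ ‖x - y‖) :
    ‖x - v‖ ^ 2 ≤ inner ℝ (x - v) (x - c) := by
  haveI : Nonempty K := ⟨⟨v, hv⟩⟩
  have heq : ‖x - v‖ = ⨅ w : K, ‖x - w‖ := by
    refine le_antisymm (le_ciInf fun w => hmin w w.2) ?_
    have hbdd : BddBelow (Set.range fun w : K => ‖x - w‖) :=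
      ⟨0, by rintro z ⟨w, rfl⟩; exact norm_nonneg _⟩
    exact ciInf_le hbdd ⟨v, hv⟩
  have h := (norm_eq_iInf_iff_real_inner_le_zero hK hv).mp heq c hc
  have h2 : (inner ℝ (x - v) (x - c) : ℝ)
      = ‖x - v‖ ^ 2 - inner ℝ (x - v) (c - v) := by
    have hxc : x - c = (x - v) - (c - v) := by abel
    rw [hxc, inner_sub_right, real_inner_self_eq_norm_sq]
  rw [h2]; linarith

private lemma lemB {E : Type*} [NormedAddCommGroup E] [InnerProductSpace ℝ E]
    {ι : Type*} (s : Finset ι) (b : ι → ℝ) (hb : ∀ j ∈ s, 0 ≤ b j) (e : ι → E) :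
    ‖∑ j ∈ s, b j • e j‖ ^ 2 ≤ (∑ j ∈ s, b j) * ∑ j ∈ s, b j * ‖e j‖ ^ 2 := by
  have h1 : ‖∑ j ∈ s, b j • e j‖ ≤ ∑ j ∈ s, b j * ‖e j‖ := by
    refine (norm_sum_le _ _).trans_eq ?_
    exact Finset.sum_congr rfl fun j hj => by
      rw [norm_smul, Real.norm_eq_abs, abs_of_nonneg (hb j hj)]
  have h2 : (∑ j ∈ s, b j * ‖e j‖) ^ 2
      ≤ (∑ j ∈ s, b j) * ∑ j ∈ s, b j * ‖e j‖ ^ 2 := by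
    have hcs := Finset.sum_mul_sq_le_sq_mul_sq s (fun j => Real.sqrt (b j))
      (fun j => Real.sqrt (b j) * ‖e j‖)
    have e1 : ∀ j ∈ s, Real.sqrt (b j) * (Real.sqrt (b j) * ‖e j‖) = b j * ‖e j‖ := by
      intro j hj; rw [← mul_assoc, Real.mul_self_sqrt (hb j hj)]
    have e2 : ∀ j ∈ s, Real.sqrt (b j) ^ 2 = b j := fun j hj => Real.sq_sqrt (hb j hj)
    have e3 : ∀ j ∈ s, (Real.sqrt (b j) * ‖e j‖) ^ 2 = b j * ‖e j‖ ^ 2 := by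
      intro j hj; rw [mul_pow, Real.sq_sqrt (hb j hj)]
    rwa [Finset.sum_congr rfl e1, Finset.sum_congr rfl e2, Finset.sum_congr rfl e3] at hcs
  calc ‖∑ j ∈ s, b j • e j‖ ^ 2 ≤ (∑ j ∈ s, b j * ‖e j‖) ^ 2 :=
        pow_le_pow_left₀ (norm_nonneg _) h1 2
    _ ≤ _ := h2

private lemma core (b0 s D E0 T W ν : ℝ) (hb0 : 0 < b0) (hs : 0 ≤ s) (hD : 0 ≤ D)
    (hE0 : 0 ≤ E0) (hT : 0 ≤ T) (hW : 0 ≤ W) (hWT : W ^ 2 ≤ s * T)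
    (hsum : b0 + s + D = 2) (hν : ν = 2 * b0 * D / (b0 + D)) :
    ν * E0 ^ 2 + (b0 * E0 + W) ^ 2 ≤ 2 * (b0 * E0 ^ 2 + T) := by
  have hden : 0 < b0 + D := by linarith
  have hν2 : ν * (b0 + D) = 2 * b0 * D := by rw [hν]; field_simp
  rcases eq_or_lt_of_le hs with hs0 | hs0
  · have hW0 : W = 0 := by nlinarith
    subst hW0
    nlinarith [sq_nonneg E0]
  · have hgoal : ν * E0 ^ 2 ≤ 2 * (b0 * E0 ^ 2 + T) - (b0 * E0 + W) ^ 2 := by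
      rw [hν, div_mul_eq_mul_div, div_le_iff₀ hden]
      have hD2 : D = 2 - b0 - s := by linarith
      subst hD2
      have hmul : s * (2 * b0 * (2 - b0 - s) * E0 ^ 2)
          ≤ s * ((2 * (b0 * E0 ^ 2 + T) - (b0 * E0 + W) ^ 2) * (b0 + (2 - b0 - s))) := by
        have hint1 := sq_nonneg (s * b0 * E0 - (b0 + (2 - b0 - s)) * W)
        have hint2 : (0:ℝ) ≤ ((b0 + (2 - b0 - s)) ^ 2 + (b0 + (2 - b0 - s)) * s) * (s * T - W ^ 2) :=
          mul_nonneg (by nlinarith [sq_nonneg (b0 + (2 - b0 - s))]) (by linarith)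
        nlinarith [hint1, hint2]
      exact le_of_mul_le_mul_left hmul hs0
    linarith

private lemma onestep {d N : ℕ}
    (C : Fin N → Set (EuclideanSpace ℝ (Fin d)))
    (hCconv : ∀ j, Convex ℝ (C j))
    (P : Fin N → EuclideanSpace ℝ (Fin d) → EuclideanSpace ℝ (Fin d))
    (hP : ∀ j x, P j x ∈ C j ∧ ∀ y ∈ C j, ‖x - P j x‖ ≤ ‖x - y‖)
    (c : EuclideanSpace ℝ (Fin d)) (hc : ∀ j, c ∈ C j)
    (b : Fin N → ℝ) (hb0 : ∀ j, 0 ≤ b j) (hb2 : ∑ j, b j ≤ 2)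
    (hI : (Finset.univ.filter fun i => 0 < b i).Nonempty)
    (x : EuclideanSpace ℝ (Fin d)) :
    ‖(x - ∑ j, b j • (x - P j x)) - c‖ ^ 2 ≤ ‖x - c‖ ^ 2 -
      ((Finset.univ.filter fun i => 0 < b i).inf' hI
          (fun i => 2 * b i * (2 - ∑ k, b k) / (b i + 2 - ∑ k, b k))) *
        ((Finset.univ.filter fun i => 0 < b i).sup' hI
          (fun i => (Metric.infDist x (C i)) ^ 2)) := by
  set e : Fin N → EuclideanSpace ℝ (Fin d) := fun j => x - P j x with he
  have hdist : ∀ i, Metric.infDist x (C i) = ‖e i‖ := by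
    intro i
    refine le_antisymm ?_ ?_
    · have h := Metric.infDist_le_dist_of_mem (x := x) (hP i x).1
      rwa [dist_eq_norm] at h
    · haveI : Nonempty (C i) := ⟨⟨c, hc i⟩⟩
      rw [Metric.infDist_eq_iInf]
      refine le_ciInf fun w => ?_
      rw [dist_eq_norm]; exact (hP i x).2 w w.2
  have hsupeq : ((Finset.univ.filter fun i => 0 < b i).sup' hI
      (fun i => (Metric.infDist x (C i)) ^ 2))
      = ((Finset.univ.filter fun i => 0 < b i).sup' hI (fun i => ‖e i‖ ^ 2)) :=
    Finset.sup'_congr hI rfl (fun i _ => by rw [hdist])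
  obtain ⟨i0, hi0, hsup⟩ :=
    Finset.exists_mem_eq_sup' hI (fun i => ‖e i‖ ^ 2)
  have hi0b : 0 < b i0 := (Finset.mem_filter.mp hi0).2
  set v : EuclideanSpace ℝ (Fin d) := ∑ j, b j • e j with hv
  set w : EuclideanSpace ℝ (Fin d) := ∑ j ∈ Finset.univ.erase i0, b j • e j with hw
  have hvw : v = b i0 • e i0 + w := by
    rw [hv, hw, ← Finset.add_sum_erase _ _ (Finset.mem_univ i0)]
  set S : ℝ := ∑ j, b j with hS
  set s : ℝ := ∑ j ∈ Finset.univ.erase i0, b j with hs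
  have hSbs : S = b i0 + s := by
    rw [hS, hs, ← Finset.add_sum_erase _ _ (Finset.mem_univ i0)]
  set T : ℝ := ∑ j ∈ Finset.univ.erase i0, b j * ‖e j‖ ^ 2 with hT
  have hTnn : 0 ≤ T := Finset.sum_nonneg fun j _ =>
    mul_nonneg (hb0 j) (sq_nonneg _)
  have hsnn : 0 ≤ s := Finset.sum_nonneg fun j _ => hb0 j
  have hWT : ‖w‖ ^ 2 ≤ s * T := lemB _ b (fun j _ => hb0 j) e
  have hinner : ∀ j, ‖e j‖ ^ 2 ≤ inner ℝ (e j) (x - c) := fun j =>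
    lemA (hCconv j) (hP j x).1 (hc j) (hP j x).2
  have hexp : ‖(x - v) - c‖ ^ 2
      = ‖x - c‖ ^ 2 - 2 * inner ℝ (x - c) v + ‖v‖ ^ 2 := by
    have : (x - v) - c = (x - c) - v := by abel
    rw [this, norm_sub_sq_real]
  have hip : (b i0) * ‖e i0‖ ^ 2 + T ≤ inner ℝ (x - c) v := by
    have h1 : (inner ℝ (x - c) v : ℝ) = ∑ j, b j * inner ℝ (x - c) (e j) := by
      rw [hv, inner_sum]
      exact Finset.sum_congr rfl fun j _ => real_inner_smul_right _ _ _
    have h2 : ∑ j, b j * ‖e j‖ ^ 2 ≤ ∑ j, b j * inner ℝ (x - c) (e j) := by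
      refine Finset.sum_le_sum fun j _ => mul_le_mul_of_nonneg_left ?_ (hb0 j)
      rw [real_inner_comm]; exact hinner j
    have h3 : ∑ j, b j * ‖e j‖ ^ 2 = b i0 * ‖e i0‖ ^ 2 + T := by
      rw [hT, ← Finset.add_sum_erase _ _ (Finset.mem_univ i0)]
    rw [h1]; rw [h3] at h2; linarith
  have hvle : ‖v‖ ^ 2 ≤ (b i0 * ‖e i0‖ + ‖w‖) ^ 2 := by
    have h1 : ‖v‖ ≤ b i0 * ‖e i0‖ + ‖w‖ := by
      rw [hvw]
      refine (norm_add_le _ _).trans ?_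
      rw [norm_smul, Real.norm_eq_abs, abs_of_nonneg hi0b.le]
    exact pow_le_pow_left₀ (norm_nonneg _) h1 2
  have hcore := core (b i0) s (2 - S) ‖e i0‖ T ‖w‖
    (2 * b i0 * (2 - S) / (b i0 + 2 - S)) hi0b hsnn (by linarith)
    (norm_nonneg _) hTnn (norm_nonneg _) hWT (by linarith)
    (by rw [hS]; ring_nf)
  have hinfle : ((Finset.univ.filter fun i => 0 < b i).inf' hI
      (fun i => 2 * b i * (2 - ∑ k, b k) / (b i + 2 - ∑ k, b k)))
      ≤ 2 * b i0 * (2 - S) / (b i0 + 2 - S) :=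
    Finset.inf'_le _ hi0
  have hν'M : ((Finset.univ.filter fun i => 0 < b i).inf' hI
      (fun i => 2 * b i * (2 - ∑ k, b k) / (b i + 2 - ∑ k, b k))) * ‖e i0‖ ^ 2
      ≤ (2 * b i0 * (2 - S) / (b i0 + 2 - S)) * ‖e i0‖ ^ 2 :=
    mul_le_mul_of_nonneg_right hinfle (sq_nonneg _)
  rw [hsupeq, hsup, hexp]
  nlinarith [hν'M, hcore, hvle, hip]

theorem stmt_19 {d N : ℕ}
    (C : Fin N → Set (EuclideanSpace ℝ (Fin d)))
    (hCconv : ∀ j, Convex ℝ (C j)) (hCcl : ∀ j, IsClosed (C j))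
    (P : Fin N → EuclideanSpace ℝ (Fin d) → EuclideanSpace ℝ (Fin d))
    (hP : ∀ j x, P j x ∈ C j ∧ ∀ y ∈ C j, ‖x - P j x‖ ≤ ‖x - y‖)
    (c : EuclideanSpace ℝ (Fin d)) (hc : ∀ j, c ∈ C j)
    (β : ℕ → Fin N → ℝ) (hβ0 : ∀ m j, 0 ≤ β m j) (hβ2 : ∀ m, ∑ j, β m j ≤ 2)
    (hI : ∀ m, (Finset.univ.filter fun i => 0 < β m i).Nonempty)
    (x : ℕ → EuclideanSpace ℝ (Fin d))
    (hx : ∀ n, x (n + 1) = x n - ∑ j, β (n + 1) j • (x n - P j (x n)))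
    (n : ℕ) :
    ‖x n - c‖ ^ 2 ≤ ‖x 0 - c‖ ^ 2 -
      ∑ m ∈ Finset.Icc 1 n,
        ((Finset.univ.filter fun i => 0 < β m i).inf' (hI m)
            (fun i => 2 * β m i * (2 - ∑ k, β m k) / (β m i + 2 - ∑ k, β m k))) *
          ((Finset.univ.filter fun i => 0 < β m i).sup' (hI m)
            (fun i => (Metric.infDist (x (m - 1)) (C i)) ^ 2)) := by
  induction n with
  | zero => simp
  | succ n ih =>
    have h1 := onestep C hCconv P hP c hc (β (n + 1)) (hβ0 (n + 1)) (hβ2 (n + 1))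
      (hI (n + 1)) (x n)
    rw [← hx n] at h1
    rw [Finset.sum_Icc_succ_top (Nat.succ_le_succ (Nat.zero_le n))]
    simp only [Nat.add_sub_cancel]
    linarith
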